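/- Let X ∈ ℝ^{M×N} with all entries nonnegative, S ∈ ℝ^{M×K} with all entries positive, H ∈ ℝ^{K×N} with all entries positive, and let v : Fin M → ℝ with v_i > 0 for all i. Let D = diag(v) and define the multiplicative update H'_{lj} = H_{lj} ((D S)ᵀ X)_{lj} / ((D S)ᵀ S H)_{lj}. Then Σ_i v_i Σ_j (X_{ij} − (SH')_{ij})² ≤ Σ_i v_i Σ_j (X_{ij} − (SH)_{ij})², i.e., the feature-weighted NMF objective does not increase under the weighted multiplicative update of H. -/

import Mathlib

open Finset Matrix

/-- Lee–Seung key majorization inequality: for a symmetric nonnegative matrix `Q` and a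
positive vector `h`, the quadratic form of `Q` is dominated by the diagonal form with
entries `(Qh)_l / h_l`. -/
lemma lee_seung_key {K : ℕ} (Q : Fin K → Fin K → ℝ) (hQ0 : ∀ l m, 0 ≤ Q l m)
    (hQs : ∀ l m, Q l m = Q m l) (h δ : Fin K → ℝ) (hh : ∀ l, 0 < h l) :
    ∑ l, ∑ m, Q l m * δ l * δ m ≤ ∑ l, (∑ m, Q l m * h m) / h l * δ l ^ 2 := by
  have hR : ∑ l, (∑ m, Q l m * h m) / h l * δ l ^ 2
      = ∑ l, ∑ m, Q l m * h m / h l * δ l ^ 2 := by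
    refine Finset.sum_congr rfl fun l _ => ?_
    rw [Finset.sum_div, Finset.sum_mul]
  rw [hR]
  have h2 : 2 * ∑ l, ∑ m, Q l m * δ l * δ m ≤ 2 * ∑ l, ∑ m, Q l m * h m / h l * δ l ^ 2 := by
    have hswap : ∑ l, ∑ m, Q l m * h m / h l * δ l ^ 2
        = ∑ l, ∑ m, Q l m * h l / h m * δ m ^ 2 := by
      rw [Finset.sum_comm]
      refine Finset.sum_congr rfl fun l _ => Finset.sum_congr rfl fun m _ => ?_
      rw [hQs l m]
    calc 2 * ∑ l, ∑ m, Q l m * δ l * δ m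
        = ∑ l, ∑ m, 2 * (Q l m * δ l * δ m) := by
          rw [Finset.mul_sum]; exact Finset.sum_congr rfl fun l _ => Finset.mul_sum _ _ _
      _ ≤ ∑ l, ∑ m, (Q l m * h m / h l * δ l ^ 2 + Q l m * h l / h m * δ m ^ 2) := by
          refine Finset.sum_le_sum fun l _ => Finset.sum_le_sum fun m _ => ?_
          have hl := hh l; have hm := hh m
          have key : h m / h l * δ l ^ 2 + h l / h m * δ m ^ 2 - 2 * (δ l * δ m)
              = (h m * δ l - h l * δ m) ^ 2 / (h l * h m) := by
            field_simp; ring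
          have hnn : 0 ≤ h m / h l * δ l ^ 2 + h l / h m * δ m ^ 2 - 2 * (δ l * δ m) := by
            rw [key]; positivity
          calc 2 * (Q l m * δ l * δ m) = Q l m * (2 * (δ l * δ m)) := by ring
            _ ≤ Q l m * (h m / h l * δ l ^ 2 + h l / h m * δ m ^ 2) :=
                mul_le_mul_of_nonneg_left (by linarith) (hQ0 l m)
            _ = Q l m * h m / h l * δ l ^ 2 + Q l m * h l / h m * δ m ^ 2 := by ring
      _ = (∑ l, ∑ m, Q l m * h m / h l * δ l ^ 2) + ∑ l, ∑ m, Q l m * h l / h m * δ m ^ 2 := by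
          rw [← Finset.sum_add_distrib]
          exact Finset.sum_congr rfl fun l _ => (Finset.sum_add_distrib)
      _ = 2 * ∑ l, ∑ m, Q l m * h m / h l * δ l ^ 2 := by rw [← hswap]; ring
  linarith

/-- One-column monotonicity of the weighted multiplicative update. -/
lemma col_step {M K : ℕ} (x : Fin M → ℝ)
    (S : Matrix (Fin M) (Fin K) ℝ) (hS : ∀ i l, 0 < S i l)
    (h : Fin K → ℝ) (hh : ∀ l, 0 < h l)
    (v : Fin M → ℝ) (hv : ∀ i, 0 < v i)
    (h' : Fin K → ℝ)
    (hh' : ∀ l, h' l = h l * (∑ i, v i * S i l * x i) /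
        (∑ m, (∑ i, v i * S i l * S i m) * h m)) :
    ∑ i, v i * (x i - ∑ l, S i l * h' l) ^ 2 ≤ ∑ i, v i * (x i - ∑ l, S i l * h l) ^ 2 := by
  rcases isEmpty_or_nonempty (Fin M) with hM | hM
  · simp
  set Q : Fin K → Fin K → ℝ := fun l m => ∑ i, v i * S i l * S i m with hQdef
  set b : Fin K → ℝ := fun l => ∑ i, v i * S i l * x i with hbdef
  set a : Fin K → ℝ := fun l => ∑ m, Q l m * h m with hadef
  have hQpos : ∀ l m, 0 < Q l m := fun l m =>
    Finset.sum_pos (fun i _ => by have := hv i; have := hS i l; have := hS i m; positivity)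
      Finset.univ_nonempty
  have hQs : ∀ l m, Q l m = Q m l := fun l m =>
    Finset.sum_congr rfl fun i _ => by ring
  have hapos : ∀ l, 0 < a l := by
    intro l
    have : Nonempty (Fin K) := ⟨l⟩
    exact Finset.sum_pos (fun m _ => mul_pos (hQpos l m) (hh m)) Finset.univ_nonempty
  set δ : Fin K → ℝ := fun l => h' l - h l with hδdef
  have hδ : ∀ l, δ l = h l * (b l - a l) / a l := by
    intro l
    have ha := (hapos l).ne'
    simp only [hδdef]
    rw [hh' l]
    show h l * b l / a l - h l = h l * (b l - a l) / a l
    field_simp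
  have hδab : ∀ l, δ l * (a l - b l) = -(a l / h l * δ l ^ 2) := by
    intro l
    have ha := (hapos l).ne'
    have hhl := (hh l).ne'
    rw [hδ l]
    field_simp
    ring
  -- expansion of the objective difference
  have hsplit : ∀ i, ∑ l, S i l * h' l = (∑ l, S i l * h l) + ∑ l, S i l * δ l := by
    intro i
    rw [← Finset.sum_add_distrib]
    refine Finset.sum_congr rfl fun l _ => ?_
    simp only [hδdef]; ring
  have hquad : ∑ i, v i * (∑ l, S i l * δ l) ^ 2 = ∑ l, ∑ m, Q l m * δ l * δ m := by
    have : ∀ i, v i * (∑ l, S i l * δ l) ^ 2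
        = ∑ l, ∑ m, v i * S i l * S i m * δ l * δ m := by
      intro i
      rw [sq, Finset.sum_mul_sum, Finset.mul_sum]
      refine Finset.sum_congr rfl fun l _ => ?_
      rw [Finset.mul_sum]
      exact Finset.sum_congr rfl fun m _ => by ring
    rw [Finset.sum_congr rfl fun i _ => this i, Finset.sum_comm]
    refine Finset.sum_congr rfl fun l _ => ?_
    rw [Finset.sum_comm]
    refine Finset.sum_congr rfl fun m _ => ?_
    rw [hQdef]
    simp only []
    rw [Finset.sum_mul, Finset.sum_mul]
  have hlin : ∑ i, v i * ((∑ l, S i l * δ l) * ((∑ l, S i l * h l) - x i))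
      = ∑ l, δ l * (a l - b l) := by
    have step1 : ∀ i, v i * ((∑ l, S i l * δ l) * ((∑ m, S i m * h m) - x i))
        = ∑ l, δ l * ((∑ m, v i * S i l * S i m * h m) - v i * S i l * x i) := by
      intro i
      rw [Finset.sum_mul, Finset.mul_sum]
      refine Finset.sum_congr rfl fun l _ => ?_
      have hmsum : ∑ m, v i * S i l * S i m * h m = v i * S i l * ∑ m, S i m * h m := by
        rw [Finset.mul_sum]
        exact Finset.sum_congr rfl fun m _ => by ring
      rw [hmsum]
      ring
    rw [Finset.sum_congr rfl fun i _ => step1 i, Finset.sum_comm]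
    refine Finset.sum_congr rfl fun l _ => ?_
    rw [← Finset.mul_sum, Finset.sum_sub_distrib]
    congr 1
    rw [hadef, hbdef]
    simp only []
    congr 1
    rw [Finset.sum_comm]
    refine Finset.sum_congr rfl fun m _ => ?_
    rw [hQdef]
    simp only []
    rw [Finset.sum_mul]
  have main : ∑ i, v i * (x i - ∑ l, S i l * h' l) ^ 2
      = (∑ i, v i * (x i - ∑ l, S i l * h l) ^ 2)
        + (∑ l, ∑ m, Q l m * δ l * δ m) + 2 * ∑ l, δ l * (a l - b l) := by
    rw [← hquad, ← hlin]
    rw [show (2 : ℝ) * ∑ i, v i * ((∑ l, S i l * δ l) * ((∑ l, S i l * h l) - x i))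
        = ∑ i, 2 * (v i * ((∑ l, S i l * δ l) * ((∑ l, S i l * h l) - x i)))
      from Finset.mul_sum _ _ _]
    rw [← Finset.sum_add_distrib, ← Finset.sum_add_distrib]
    refine Finset.sum_congr rfl fun i _ => ?_
    rw [hsplit i]
    ring
  rw [main]
  have hkey := lee_seung_key Q (fun l m => (hQpos l m).le) hQs h δ hh
  have hsum2 : ∑ l, δ l * (a l - b l) = -∑ l, a l / h l * δ l ^ 2 := by
    rw [← Finset.sum_neg_distrib]
    exact Finset.sum_congr rfl fun l _ => hδab l
  have hnn : 0 ≤ ∑ l, a l / h l * δ l ^ 2 :=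
    Finset.sum_nonneg fun l _ => by
      have := hapos l; have := hh l; positivity
  have hkey' : ∑ l, ∑ m, Q l m * δ l * δ m ≤ ∑ l, a l / h l * δ l ^ 2 := hkey
  linarith

theorem weighted_nmf_H_update_monotone {M N K : ℕ}
    (X : Matrix (Fin M) (Fin N) ℝ) (hX : ∀ i j, 0 ≤ X i j)
    (S : Matrix (Fin M) (Fin K) ℝ) (hS : ∀ i l, 0 < S i l)
    (H : Matrix (Fin K) (Fin N) ℝ) (hH : ∀ l j, 0 < H l j)
    (v : Fin M → ℝ) (hv : ∀ i, 0 < v i)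
    (D : Matrix (Fin M) (Fin M) ℝ) (hD : D = Matrix.diagonal v)
    (H' : Matrix (Fin K) (Fin N) ℝ)
    (hH' : ∀ l j, H' l j = H l j * ((D * S)ᵀ * X) l j / ((D * S)ᵀ * S * H) l j) :
    ∑ i, v i * ∑ j, (X i j - (S * H') i j) ^ 2 ≤
      ∑ i, v i * ∑ j, (X i j - (S * H) i j) ^ 2 := by
  have hDS : ∀ i l, (D * S) i l = v i * S i l := by
    intro i l
    rw [hD, Matrix.diagonal_mul]
  have hswap : ∀ (G : Matrix (Fin K) (Fin N) ℝ),
      ∑ i, v i * ∑ j, (X i j - (S * G) i j) ^ 2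
        = ∑ j : Fin N, ∑ i, v i * (X i j - ∑ l, S i l * G l j) ^ 2 := by
    intro G
    rw [Finset.sum_comm]
    refine Finset.sum_congr rfl fun i _ => ?_
    rw [Finset.mul_sum]
    refine Finset.sum_congr rfl fun j _ => ?_
    rw [Matrix.mul_apply]
  rw [hswap H', hswap H]
  refine Finset.sum_le_sum fun j _ => ?_
  refine col_step (fun i => X i j) S hS (fun l => H l j) (fun l => hH l j) v hv
    (fun l => H' l j) ?_
  intro l
  show H' l j = H l j * (∑ i, v i * S i l * X i j) /
      ∑ m, (∑ i, v i * S i l * S i m) * H m j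
  have h1 : ((D * S)ᵀ * X) l j = ∑ i, v i * S i l * X i j := by
    rw [Matrix.mul_apply]
    exact Finset.sum_congr rfl fun i _ => by rw [Matrix.transpose_apply, hDS]
  have h2 : ((D * S)ᵀ * S * H) l j = ∑ m, (∑ i, v i * S i l * S i m) * H m j := by
    rw [Matrix.mul_apply]
    refine Finset.sum_congr rfl fun m _ => ?_
    congr 1
    rw [Matrix.mul_apply]
    exact Finset.sum_congr rfl fun i _ => by rw [Matrix.transpose_apply, hDS]
  rw [hH' l j, h1, h2]
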